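/- Let G be a complete group (i.e., G has trivial center and every automorphism of G is inner). Then the quotient group T(G) = NHol(G)/Hol(G) is elementary 2-abelian. -/

import Mathlib

/-- The left regular representation `λ : G →* Perm G`, `λ(σ)(x) = σ·x`. -/
def lambda (G : Type*) [Group G] : G →* Equiv.Perm G where
  toFun σ := Equiv.mulLeft σ
  map_one' := by ext x; simp
  map_mul' σ τ := by ext x; simp [mul_assoc]

/-- The right regular representation `ρ : G →* Perm G`, `ρ(σ)(x) = x·σ⁻¹`. -/
def rho (G : Type*) [Group G] : G →* Equiv.Perm G where
  toFun σ := Equiv.mulRight σ⁻¹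
  map_one' := by ext x; simp
  map_mul' σ τ := by ext x; simp [mul_assoc]

/-- The holomorph `Hol(G)`: the normalizer of `λ(G)` in `Perm G`. -/
def Hol (G : Type*) [Group G] : Subgroup (Equiv.Perm G) :=
  Subgroup.normalizer (((lambda G).range : Subgroup (Equiv.Perm G)) : Set (Equiv.Perm G))

/-- The multiple holomorph `NHol(G)`: the normalizer of `Hol(G)` in `Perm G`. -/
def NHol (G : Type*) [Group G] : Subgroup (Equiv.Perm G) :=
  Subgroup.normalizer ((Hol G : Subgroup (Equiv.Perm G)) : Set (Equiv.Perm G))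

instance holNormalInNHol (G : Type*) [Group G] :
    ((Hol G).subgroupOf (NHol G)).Normal :=
  Subgroup.normal_in_normalizer

/-- `T(G) = NHol(G) / Hol(G)`. -/
def THol (G : Type*) [Group G] : Type _ :=
  NHol G ⧸ (Hol G).subgroupOf (NHol G)

noncomputable instance (G : Type*) [Group G] : Group (THol G) :=
  QuotientGroup.Quotient.group _

section Helpers

variable {G : Type*} [Group G]

lemma lambda_apply (g x : G) : lambda G g x = g * x := rfl

lemma rho_apply (g x : G) : rho G g x = x * g⁻¹ := rfl

/-- `LR g h` is the permutation `x ↦ g * x * h⁻¹`. -/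
def LR (g h : G) : Equiv.Perm G := lambda G g * rho G h

lemma LR_def (g h : G) : LR g h = lambda G g * rho G h := rfl

lemma LR_apply (g h x : G) : LR g h x = g * (x * h⁻¹) := rfl

lemma LR_mul (g h g' h' : G) : LR g h * LR g' h' = LR (g * g') (h * h') := by
  ext x; simp [LR_apply, Equiv.Perm.mul_apply, mul_assoc]

lemma LR_one : LR (1 : G) 1 = 1 := by
  ext x; simp [LR_apply]

lemma LR_inv (g h : G) : (LR g h)⁻¹ = LR g⁻¹ h⁻¹ := by
  apply inv_eq_of_mul_eq_one_right
  rw [LR_mul]; simp [LR_one]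

lemma lambda_eq_LR (g : G) : lambda G g = LR g 1 := by
  ext x; simp [LR_apply, lambda_apply]

lemma rho_eq_LR (h : G) : rho G h = LR 1 h := by
  ext x; simp [LR_apply, rho_apply]

lemma lambda_rho_comm (g h : G) : lambda G g * rho G h = rho G h * lambda G g := by
  ext x; simp [lambda_apply, rho_apply, Equiv.Perm.mul_apply, mul_assoc]

lemma eq_one_of_central (hZ : Subgroup.center G = ⊥) {z : G}
    (h : ∀ g : G, g * z = z * g) : z = 1 := by
  have hz : z ∈ Subgroup.center G := Subgroup.mem_center_iff.mpr h
  rw [hZ] at hz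
  exact Subgroup.mem_bot.mp hz

lemma LR_unique (hZ : Subgroup.center G = ⊥) {g h g' h' : G}
    (e : LR g h = LR g' h') : g = g' ∧ h = h' := by
  have e' : ∀ x : G, g * (x * h⁻¹) = g' * (x * h'⁻¹) := fun x => by
    have := DFunLike.congr_fun e x
    simpa [LR_apply] using this
  have e1 : g = g' * (h * h'⁻¹) := by
    have := e' h
    simpa using this
  have hz : ∀ x : G, (h * h'⁻¹) * x = x * (h'⁻¹ * h) := by
    intro x
    have := e' x
    rw [e1] at this
    -- g' * (h * h'⁻¹) * (x * h⁻¹) = g' * (x * h'⁻¹)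
    have h2 : (h * h'⁻¹) * (x * h⁻¹) = x * h'⁻¹ := by
      rw [mul_assoc] at this
      exact mul_left_cancel this
    have := congrArg (· * h) h2
    simpa [mul_assoc] using this
  have hq : h * h'⁻¹ = h'⁻¹ * h := by
    have := hz 1; simpa using this
  have hcen : ∀ x : G, x * (h * h'⁻¹) = (h * h'⁻¹) * x := by
    intro x
    rw [hz x, ← hq]
  have h1 : h * h'⁻¹ = 1 := eq_one_of_central hZ hcen
  have hh : h = h' := by
    have := mul_inv_eq_one.mp h1; exact this
  refine ⟨?_, hh⟩
  rw [e1, hh]; simp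

lemma mem_Hol_iff {f : Equiv.Perm G} :
    f ∈ Hol G ↔ ∀ n, n ∈ (lambda G).range ↔ f * n * f⁻¹ ∈ (lambda G).range :=
  Subgroup.mem_normalizer_iff

lemma LR_mem_Hol (g h : G) : LR g h ∈ Hol G := by
  rw [mem_Hol_iff]
  intro n
  constructor
  · rintro ⟨σ, rfl⟩
    refine ⟨g * σ * g⁻¹, ?_⟩
    rw [lambda_eq_LR, lambda_eq_LR, LR_inv, LR_mul, LR_mul]
    congr 1 <;> simp
  · rintro ⟨τ, hτ⟩
    refine ⟨g⁻¹ * τ * g, ?_⟩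
    have : n = (LR g h)⁻¹ * lambda G τ * LR g h := by
      rw [hτ]; group
    rw [this, lambda_eq_LR, lambda_eq_LR, LR_inv, LR_mul, LR_mul]
    congr 1 <;> simp

lemma lambda_mem_Hol (g : G) : lambda G g ∈ Hol G := by
  rw [lambda_eq_LR]; exact LR_mem_Hol g 1

lemma rho_mem_Hol (h : G) : rho G h ∈ Hol G := by
  rw [rho_eq_LR]; exact LR_mem_Hol 1 h

lemma lambda_conj_LR (g p q : G) :
    lambda G g * LR p q * (lambda G g)⁻¹ = LR (g * p * g⁻¹) q := by
  rw [lambda_eq_LR, LR_inv, LR_mul, LR_mul]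
  congr 1 <;> simp

lemma rho_conj_LR (g p q : G) :
    rho G g * LR p q * (rho G g)⁻¹ = LR p (g * q * g⁻¹) := by
  rw [rho_eq_LR, LR_inv, LR_mul, LR_mul]
  congr 1 <;> simp

lemma comm_rho_eq_lambda (f : Equiv.Perm G) (h : ∀ σ, f * rho G σ = rho G σ * f) :
    f = lambda G (f 1) := by
  ext x
  have h2 := DFunLike.congr_fun (h x⁻¹) 1
  simp only [Equiv.Perm.mul_apply] at h2
  rw [rho_apply, rho_apply] at h2
  simp only [inv_inv, one_mul] at h2
  simpa [lambda_apply] using h2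

lemma lambda_injective : Function.Injective (lambda G) := fun x y h => by
  have := DFunLike.congr_fun h 1
  simpa [lambda_apply] using this

end Helpers

section ExistsLR

variable {G : Type*} [Group G]

lemma exists_LR (hinn : Function.Surjective (MulAut.conj : G →* MulAut G))
    (f : Equiv.Perm G) (hf : f ∈ Hol G) : ∃ g h : G, f = LR g h := by
  classical
  have hf' : f⁻¹ ∈ Hol G := inv_mem hf
  have Ex : ∀ σ : G, ∃ τ : G, lambda G τ = f * lambda G σ * f⁻¹ := fun σ =>
    (mem_Hol_iff.mp hf _).mp ⟨σ, rfl⟩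
  choose θ hθ using Ex
  have Ex' : ∀ σ : G, ∃ τ : G, lambda G τ = f⁻¹ * lambda G σ * f := fun σ => by
    have := (mem_Hol_iff.mp hf' _).mp (⟨σ, rfl⟩ : lambda G σ ∈ (lambda G).range)
    rwa [inv_inv] at this
  choose θ' hθ' using Ex'
  have hmul : ∀ σ τ : G, θ (σ * τ) = θ σ * θ τ := by
    intro σ τ
    apply lambda_injective
    rw [map_mul, hθ, hθ, hθ, map_mul]; group
  have hli : ∀ σ, θ' (θ σ) = σ := by
    intro σ; apply lambda_injective; rw [hθ', hθ]; group
  have hri : ∀ σ, θ (θ' σ) = σ := by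
    intro σ; apply lambda_injective; rw [hθ, hθ']; group
  let ψ : MulAut G :=
    { toFun := θ, invFun := θ', left_inv := hli, right_inv := hri, map_mul' := hmul }
  obtain ⟨k, hk⟩ := hinn ψ
  have hkθ : ∀ σ : G, θ σ = k * σ * k⁻¹ := by
    intro σ
    have h := congrArg (fun (e : MulAut G) => e σ) hk
    have h2 : MulAut.conj k σ = ψ σ := h
    rw [MulAut.conj_apply] at h2
    exact h2.symm
  refine ⟨k, (f 1)⁻¹ * k, ?_⟩
  ext x
  have h2 : lambda G (θ x) * f = f * lambda G x := by
    rw [hθ]; group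
  have h3 := DFunLike.congr_fun h2 1
  simp only [Equiv.Perm.mul_apply, lambda_apply, mul_one] at h3
  -- h3 : θ x * f 1 = f x
  rw [LR_apply, ← h3, hkθ]
  simp [mul_assoc]

end ExistsLR

section Key

variable {G : Type*} [Group G]

lemma key (hZ : Subgroup.center G = ⊥)
    (hinn : Function.Surjective (MulAut.conj : G →* MulAut G))
    {π : Equiv.Perm G} (hπ : π ∈ NHol G) (h1 : π 1 = 1) :
    ∀ σ : G, ∃ τ : G, π * (π * lambda G σ * π⁻¹) * π⁻¹ = lambda G τ := by
  classical
  have hπ' : π⁻¹ ∈ NHol G := inv_mem hπ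
  have h1' : (π⁻¹ : Equiv.Perm G) 1 = 1 := by
    calc (π⁻¹ : Equiv.Perm G) 1 = π⁻¹ (π 1) := by rw [h1]
    _ = 1 := π.symm_apply_apply 1
  have conjHol : ∀ f, f ∈ Hol G → π * f * π⁻¹ ∈ Hol G := fun f hf =>
    (Subgroup.mem_normalizer_iff.mp hπ f).mp hf
  have conjHol' : ∀ f, f ∈ Hol G → π⁻¹ * f * π ∈ Hol G := fun f hf => by
    have := (Subgroup.mem_normalizer_iff.mp hπ' f).mp hf
    rwa [inv_inv] at this
  -- the coordinate functions
  have ExA : ∀ σ : G, ∃ g h : G, π * lambda G σ * π⁻¹ = LR g h := fun σ =>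
    exists_LR hinn _ (conjHol _ (lambda_mem_Hol σ))
  choose a b hab using ExA
  have ExC : ∀ σ : G, ∃ g h : G, π * rho G σ * π⁻¹ = LR g h := fun σ =>
    exists_LR hinn _ (conjHol _ (rho_mem_Hol σ))
  choose c d hcd using ExC
  -- homomorphism properties
  have hmulAB : ∀ σ τ : G, a (σ * τ) = a σ * a τ ∧ b (σ * τ) = b σ * b τ := by
    intro σ τ
    apply LR_unique hZ
    rw [← hab, ← LR_mul, ← hab, ← hab, map_mul]
    group
  have hmulCD : ∀ σ τ : G, c (σ * τ) = c σ * c τ ∧ d (σ * τ) = d σ * d τ := by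
    intro σ τ
    apply LR_unique hZ
    rw [← hcd, ← LR_mul, ← hcd, ← hcd, map_mul]
    group
  have ha1 : a 1 = 1 ∧ b 1 = 1 := by
    apply LR_unique hZ
    rw [← hab, map_one, LR_one]
    group
  have hc1 : c 1 = 1 ∧ d 1 = 1 := by
    apply LR_unique hZ
    rw [← hcd, map_one, LR_one]
    group
  have haInv : ∀ σ : G, a σ⁻¹ = (a σ)⁻¹ ∧ b σ⁻¹ = (b σ)⁻¹ := by
    intro σ
    have h := hmulAB σ⁻¹ σ
    rw [inv_mul_cancel, ha1.1, ha1.2] at h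
    exact ⟨eq_inv_of_mul_eq_one_left h.1.symm, eq_inv_of_mul_eq_one_left h.2.symm⟩
  have hcInv : ∀ σ : G, c σ⁻¹ = (c σ)⁻¹ ∧ d σ⁻¹ = (d σ)⁻¹ := by
    intro σ
    have h := hmulCD σ⁻¹ σ
    rw [inv_mul_cancel, hc1.1, hc1.2] at h
    exact ⟨eq_inv_of_mul_eq_one_left h.1.symm, eq_inv_of_mul_eq_one_left h.2.symm⟩
  have hker : ∀ σ : G, a σ = 1 → b σ = 1 → σ = 1 := by
    intro σ ea eb
    have h := hab σ
    rw [ea, eb, LR_one] at h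
    have h2 : lambda G σ = π⁻¹ * 1 * π := by rw [← h]; group
    have h3 : lambda G σ = 1 := by simpa using h2
    have := DFunLike.congr_fun h3 1
    simpa [lambda_apply] using this
  -- evaluations at 1
  have heval : ∀ σ : G, π σ = a σ * (b σ)⁻¹ := by
    intro σ
    have h := DFunLike.congr_fun (hab σ) 1
    simp only [Equiv.Perm.mul_apply, LR_apply] at h
    rw [h1'] at h
    simpa [lambda_apply] using h
  have hevalρ : ∀ σ : G, π σ⁻¹ = c σ * (d σ)⁻¹ := by
    intro σ
    have h := DFunLike.congr_fun (hcd σ) 1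
    simp only [Equiv.Perm.mul_apply, LR_apply] at h
    rw [h1'] at h
    simpa [rho_apply] using h
  -- E4 : commutators [g, a σ] are a-values of ker b
  have E4 : ∀ g σ : G, ∃ u : G, a u = g * a σ * g⁻¹ * (a σ)⁻¹ ∧ b u = 1 := by
    intro g σ
    have hf : π⁻¹ * lambda G g * π ∈ Hol G := conjHol' _ (lambda_mem_Hol g)
    obtain ⟨τ, hτ⟩ :=
      (mem_Hol_iff.mp hf (lambda G σ)).mp ⟨σ, rfl⟩
    have h3 : π * lambda G τ * π⁻¹ = lambda G g * (π * lambda G σ * π⁻¹) * (lambda G g)⁻¹ := by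
      rw [hτ]; group
    rw [hab σ, hab τ, lambda_conj_LR] at h3
    obtain ⟨eA, eB⟩ := LR_unique hZ h3
    refine ⟨τ * σ⁻¹, ?_, ?_⟩
    · rw [(hmulAB τ σ⁻¹).1, (haInv σ).1, eA]
    · rw [(hmulAB τ σ⁻¹).2, (haInv σ).2, eB]
      simp
  have E5 : ∀ g σ : G, ∃ v : G, a v = 1 ∧ b v = g * b σ * g⁻¹ * (b σ)⁻¹ := by
    intro g σ
    have hf : π⁻¹ * rho G g * π ∈ Hol G := conjHol' _ (rho_mem_Hol g)
    obtain ⟨τ, hτ⟩ :=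
      (mem_Hol_iff.mp hf (lambda G σ)).mp ⟨σ, rfl⟩
    have h3 : π * lambda G τ * π⁻¹ = rho G g * (π * lambda G σ * π⁻¹) * (rho G g)⁻¹ := by
      rw [hτ]; group
    rw [hab σ, hab τ, rho_conj_LR] at h3
    obtain ⟨eA, eB⟩ := LR_unique hZ h3
    refine ⟨τ * σ⁻¹, ?_, ?_⟩
    · rw [(hmulAB τ σ⁻¹).1, (haInv σ).1, eA]
      simp
    · rw [(hmulAB τ σ⁻¹).2, (haInv σ).2, eB]
  -- E6 : triviality of S ∩ T
  have E6 : ∀ u v : G, b u = 1 → a v = 1 → a u = b v → a u = 1 := by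
    intro u v hbu hav heq
    have h := heval (u * v)
    rw [(hmulAB u v).1, (hmulAB u v).2, hav, hbu, mul_one, one_mul, heq] at h
    have huv : u * v = 1 := by
      apply π.injective
      rw [h1, h]
      simp
    calc a u = a u * a v := by rw [hav, mul_one]
    _ = a (u * v) := ((hmulAB u v).1).symm
    _ = a 1 := by rw [huv]
    _ = 1 := ha1.1
  -- E7 : an element which is both an a-value and a b-value is trivial
  have E7 : ∀ α β : G, a α = b β → a α = 1 := by
    intro α β he
    apply eq_one_of_central hZ
    intro g
    obtain ⟨u, hu1, hu2⟩ := E4 g α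
    obtain ⟨v, hv1, hv2⟩ := E5 g β
    have h6 := E6 u v hu2 hv1 (by rw [hu1, hv2, he])
    rw [hu1] at h6
    have h2 : g * a α * g⁻¹ = a α := by
      have := congrArg (· * a α) h6
      simpa [mul_assoc] using this
    have := congrArg (· * g) h2
    simpa [mul_assoc] using this
  -- E8 : a-values commute with b-values
  have E8 : ∀ σ t : G, a σ * b t = b t * a σ := by
    intro σ t
    obtain ⟨u, hu1, hu2⟩ := E4 (b t) σ
    obtain ⟨v, hv1, hv2⟩ := E5 (a σ) t
    have h6 := E6 u v⁻¹ hu2 (by rw [(haInv v).1, hv1]; simp)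
      (by rw [hu1, (haInv v).2, hv2]; group)
    rw [hu1] at h6
    have h2 : b t * a σ * (b t)⁻¹ = a σ := by
      have := congrArg (· * a σ) h6
      simpa [mul_assoc] using this
    have h3 := congrArg (· * b t) h2
    simp only [mul_assoc] at h3
    simp at h3
    exact h3.symm
  -- E3 : a-values commute with c-values, b-values with d-values
  have E3 : ∀ σ t : G, a σ * c t = c t * a σ ∧ b σ * d t = d t * b σ := by
    intro σ t
    have hcomm : (π * lambda G σ * π⁻¹) * (π * rho G t * π⁻¹)
        = (π * rho G t * π⁻¹) * (π * lambda G σ * π⁻¹) := by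
      have h := lambda_rho_comm σ t
      calc (π * lambda G σ * π⁻¹) * (π * rho G t * π⁻¹)
          = π * (lambda G σ * rho G t) * π⁻¹ := by group
      _ = π * (rho G t * lambda G σ) * π⁻¹ := by rw [h]
      _ = (π * rho G t * π⁻¹) * (π * lambda G σ * π⁻¹) := by group
    rw [hab, hcd, LR_mul, LR_mul] at hcomm
    exact LR_unique hZ hcomm
  -- conjugation of ρ-elements by Hol elements stays in ρ(G)
  have hol_conj_rho : ∀ f, f ∈ Hol G → ∀ t : G, ∃ s : G, f * rho G t * f⁻¹ = rho G s := by
    intro f hf t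
    obtain ⟨p, q, rfl⟩ := exists_LR hinn f hf
    refine ⟨q * t * q⁻¹, ?_⟩
    rw [rho_eq_LR, rho_eq_LR, LR_inv, LR_mul, LR_mul]
    congr 1 <;> simp
  -- mirror lemmas for c, d
  have E4' : ∀ g t : G, ∃ u : G, c u = g * c t * g⁻¹ * (c t)⁻¹ ∧ d u = 1 := by
    intro g t
    have hf : π⁻¹ * lambda G g * π ∈ Hol G := conjHol' _ (lambda_mem_Hol g)
    obtain ⟨s, hs⟩ := hol_conj_rho _ hf t
    have h3 : π * rho G s * π⁻¹ = lambda G g * (π * rho G t * π⁻¹) * (lambda G g)⁻¹ := by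
      rw [← hs]; group
    rw [hcd t, hcd s, lambda_conj_LR] at h3
    obtain ⟨eA, eB⟩ := LR_unique hZ h3
    refine ⟨s * t⁻¹, ?_, ?_⟩
    · rw [(hmulCD s t⁻¹).1, (hcInv t).1, eA]
    · rw [(hmulCD s t⁻¹).2, (hcInv t).2, eB]
      simp
  have E5' : ∀ g t : G, ∃ v : G, c v = 1 ∧ d v = g * d t * g⁻¹ * (d t)⁻¹ := by
    intro g t
    have hf : π⁻¹ * rho G g * π ∈ Hol G := conjHol' _ (rho_mem_Hol g)
    obtain ⟨s, hs⟩ := hol_conj_rho _ hf t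
    have h3 : π * rho G s * π⁻¹ = rho G g * (π * rho G t * π⁻¹) * (rho G g)⁻¹ := by
      rw [← hs]; group
    rw [hcd t, hcd s, rho_conj_LR] at h3
    obtain ⟨eA, eB⟩ := LR_unique hZ h3
    refine ⟨s * t⁻¹, ?_, ?_⟩
    · rw [(hmulCD s t⁻¹).1, (hcInv t).1, eA]
      simp
    · rw [(hmulCD s t⁻¹).2, (hcInv t).2, eB]
  have E6' : ∀ u v : G, d u = 1 → c v = 1 → c u = d v → c u = 1 := by
    intro u v hdu hcv heq
    have h := hevalρ (u * v)
    rw [(hmulCD u v).1, (hmulCD u v).2, hcv, hdu, mul_one, one_mul, heq] at h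
    have huv : (u * v)⁻¹ = 1 := by
      apply π.injective
      rw [h1, h]
      simp
    have huv2 : u * v = 1 := inv_eq_one.mp huv
    calc c u = c u * c v := by rw [hcv, mul_one]
    _ = c (u * v) := ((hmulCD u v).1).symm
    _ = c 1 := by rw [huv2]
    _ = 1 := hc1.1
  have E7' : ∀ α β : G, c α = d β → c α = 1 := by
    intro α β he
    apply eq_one_of_central hZ
    intro g
    obtain ⟨u, hu1, hu2⟩ := E4' g α
    obtain ⟨v, hv1, hv2⟩ := E5' g β
    have h6 := E6' u v hu2 hv1 (by rw [hu1, hv2, he])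
    rw [hu1] at h6
    have h2 : g * c α * g⁻¹ = c α := by
      have := congrArg (· * c α) h6
      simpa [mul_assoc] using this
    have := congrArg (· * g) h2
    simpa [mul_assoc] using this
  have E10 : ∀ σ t : G, c σ * d t = d t * c σ := by
    intro σ t
    obtain ⟨u, hu1, hu2⟩ := E4' (d t) σ
    obtain ⟨v, hv1, hv2⟩ := E5' (c σ) t
    have h6 := E6' u v⁻¹ hu2 (by rw [(hcInv v).1, hv1]; simp)
      (by rw [hu1, (hcInv v).2, hv2]; group)
    rw [hu1] at h6
    have h2 : d t * c σ * (d t)⁻¹ = c σ := by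
      have := congrArg (· * c σ) h6
      simpa [mul_assoc] using this
    have h3 := congrArg (· * d t) h2
    simp only [mul_assoc] at h3
    simp at h3
    exact h3.symm
  -- membership lemmas: d-values are a-values, c-values are b-values
  have M3 : ∀ t : G, ∃ w : G, a w = 1 ∧ b w = c t := by
    intro t
    set f := π⁻¹ * rho G (c t) * π with hfdef
    have hcomm : ∀ σ : G, f * rho G σ = rho G σ * f := by
      intro σ
      have hkey : rho G (c t) * (π * rho G σ * π⁻¹)
          = (π * rho G σ * π⁻¹) * rho G (c t) := by
        rw [hcd σ, rho_eq_LR (c t), LR_mul, LR_mul, one_mul, mul_one, E10 t σ]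
      calc f * rho G σ = π⁻¹ * (rho G (c t) * (π * rho G σ * π⁻¹)) * π := by
            rw [hfdef]; group
      _ = π⁻¹ * ((π * rho G σ * π⁻¹) * rho G (c t)) * π := by rw [hkey]
      _ = rho G σ * f := by rw [hfdef]; group
    have hfl := comm_rho_eq_lambda f hcomm
    refine ⟨f 1, ?_, ?_⟩
    all_goals {
      have h4 : rho G (c t) = π * lambda G (f 1) * π⁻¹ := by
        rw [← hfl, hfdef]; group
      rw [hab, rho_eq_LR] at h4
      have h5 := LR_unique hZ h4
      first
        | exact h5.1.symm
        | exact h5.2.symm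
    }
  have M4 : ∀ t : G, ∃ w : G, a w = d t ∧ b w = 1 := by
    intro t
    set f := π⁻¹ * lambda G (d t) * π with hfdef
    have hcomm : ∀ σ : G, f * rho G σ = rho G σ * f := by
      intro σ
      have hkey : lambda G (d t) * (π * rho G σ * π⁻¹)
          = (π * rho G σ * π⁻¹) * lambda G (d t) := by
        rw [hcd σ, lambda_eq_LR (d t), LR_mul, LR_mul, one_mul, mul_one, (E10 σ t).symm]
      calc f * rho G σ = π⁻¹ * (lambda G (d t) * (π * rho G σ * π⁻¹)) * π := by
            rw [hfdef]; group
      _ = π⁻¹ * ((π * rho G σ * π⁻¹) * lambda G (d t)) * π := by rw [hkey]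
      _ = rho G σ * f := by rw [hfdef]; group
    have hfl := comm_rho_eq_lambda f hcomm
    refine ⟨f 1, ?_, ?_⟩
    all_goals {
      have h4 : lambda G (d t) = π * lambda G (f 1) * π⁻¹ := by
        rw [← hfl, hfdef]; group
      rw [hab, lambda_eq_LR (d t)] at h4
      have h5 := LR_unique hZ h4
      first
        | exact h5.1.symm
        | exact h5.2.symm
    }
  -- R1 : relation between (c,d) and (a,b)
  have E12 : ∀ t : G, c t * (d t)⁻¹ = (a t)⁻¹ * b t := by
    intro t
    have h2 := hevalρ t
    have h3 := heval t⁻¹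
    rw [(haInv t).1, (haInv t).2, inv_inv] at h3
    exact h2.symm.trans h3
  -- identification : d = a and c = b
  have E13 : ∀ t : G, d t = a t ∧ c t = b t := by
    intro t
    obtain ⟨w₁, hw1a, hw1b⟩ := M4 t
    obtain ⟨w₂, hw2a, hw2b⟩ := M3 t
    have hwa : (a t)⁻¹ * d t = a (t⁻¹ * w₁) := by
      rw [(hmulAB t⁻¹ w₁).1, (haInv t).1, hw1a]
    have hwb : c t * (b t)⁻¹ = b (w₂ * t⁻¹) := by
      rw [(hmulAB w₂ t⁻¹).2, (haInv t).2, hw2b]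
    have hculprit : c t * (b t)⁻¹ = (a t)⁻¹ * d t := by
      have h := E12 t
      have hbd := (E3 t t).2
      have h2 : c t = (a t)⁻¹ * b t * d t := by
        have := congrArg (· * d t) h
        simpa [mul_assoc] using this
      rw [h2, mul_assoc ((a t)⁻¹) (b t) (d t), hbd]
      simp [mul_assoc]
    have hw0 : a (t⁻¹ * w₁) = b (w₂ * t⁻¹) := by rw [← hwa, ← hwb, hculprit]
    have hz := E7 _ _ hw0
    have h7 : (a t)⁻¹ * d t = 1 := by rw [hwa]; exact hz
    have hda : d t = a t := (inv_mul_eq_one.mp h7).symm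
    have h8 : c t * (b t)⁻¹ = 1 := by rw [hculprit]; exact h7
    exact ⟨hda, mul_inv_eq_one.mp h8⟩
  -- the automorphism ψ : σ ↦ a σ * b σ
  have hψmul : ∀ σ τ : G, a (σ * τ) * b (σ * τ) = (a σ * b σ) * (a τ * b τ) := by
    intro σ τ
    rw [(hmulAB σ τ).1, (hmulAB σ τ).2]
    have h := E8 τ σ
    calc a σ * a τ * (b σ * b τ) = a σ * ((a τ * b σ) * b τ) := by simp [mul_assoc]
    _ = a σ * ((b σ * a τ) * b τ) := by rw [h]
    _ = a σ * b σ * (a τ * b τ) := by simp [mul_assoc]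
  have hker' : ∀ σ : G, a σ * b σ = 1 → σ = 1 := by
    intro σ h
    have h2 : a σ = (b σ)⁻¹ := eq_inv_of_mul_eq_one_left h
    have h3 : a σ = b σ⁻¹ := by rw [h2, ← (haInv σ).2]
    have h4 := E7 σ σ⁻¹ h3
    have h5 : b σ = 1 := by
      rw [h4, one_mul] at h
      exact h
    exact hker σ h4 h5
  have hinj : Function.Injective (fun σ : G => a σ * b σ) := by
    intro σ τ h
    simp only at h
    have h2 : a (σ * τ⁻¹) * b (σ * τ⁻¹) = 1 := by
      have h6 := hψmul (σ * τ⁻¹) τ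
      rw [inv_mul_cancel_right, h] at h6
      exact (right_eq_mul.mp h6)
    have := hker' _ h2
    exact mul_inv_eq_one.mp this
  have hsurj : Function.Surjective (fun σ : G => a σ * b σ) := by
    intro x
    set τ := π⁻¹ x with hτdef
    have hx : π τ = x := π.apply_symm_apply x
    set σ := π⁻¹ (a τ * b τ) with hσdef
    have hσ : π σ = a τ * b τ := π.apply_symm_apply _
    have h2 : a σ * (b σ)⁻¹ = a τ * b τ := by rw [← heval σ, hσ]
    have h3 : a (τ⁻¹ * σ) = b (τ * σ) := by
      rw [(hmulAB τ⁻¹ σ).1, (haInv τ).1, (hmulAB τ σ).2]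
      have h4 : a σ = a τ * b τ * b σ := by
        have := congrArg (· * b σ) h2
        simpa [mul_assoc] using this
      rw [h4]; group
    have h5 := E7 _ _ h3
    have h6 : a σ = a τ := by
      have h7 : (a τ)⁻¹ * a σ = 1 := by
        rw [← (haInv τ).1, ← (hmulAB τ⁻¹ σ).1]
        exact h5
      exact (inv_mul_eq_one.mp h7).symm
    have h7 : b σ = (b τ)⁻¹ := by
      have hbv : b (τ * σ) = 1 := by rw [← h3]; exact h5
      have h8 : b τ * b σ = 1 := by rw [← (hmulAB τ σ).2]; exact hbv
      have := congrArg ((b τ)⁻¹ * ·) h8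
      simpa [mul_assoc] using this
    refine ⟨σ, ?_⟩
    simp only
    rw [h6, h7, ← heval τ, hx]
  -- build the automorphism and use completeness
  let φ : G →* G :=
    { toFun := fun σ => a σ * b σ
      map_one' := by show a 1 * b 1 = 1; rw [ha1.1, ha1.2, one_mul]
      map_mul' := hψmul }
  let ψ : MulAut G := MulEquiv.ofBijective φ ⟨hinj, hsurj⟩
  obtain ⟨g, hg⟩ := hinn ψ
  have hgψ : ∀ σ : G, g * σ * g⁻¹ = a σ * b σ := by
    intro σ
    have h := congrArg (fun (e : MulAut G) => e σ) hg
    have h2 : MulAut.conj g σ = ψ σ := h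
    rw [MulAut.conj_apply] at h2
    exact h2
  -- b ∘ a = 1
  have E16 : ∀ σ : G, b (a σ) = 1 := by
    intro σ
    obtain ⟨u, hu1, hu2⟩ := E4 g σ
    have h2 : g * a σ * g⁻¹ = a (u * σ) := by
      rw [(hmulAB u σ).1, hu1]; group
    have h3 : a (a σ) * b (a σ) = g * a σ * g⁻¹ := (hgψ (a σ)).symm
    have h4 : b (a σ) = a ((a σ)⁻¹ * (u * σ)) := by
      rw [(hmulAB ((a σ)⁻¹) (u * σ)).1, (haInv (a σ)).1, ← h2, ← h3]
      group
    rw [h4]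
    exact E7 _ _ h4.symm
  -- a ∘ b = 1
  have E17 : ∀ σ : G, a (b σ) = 1 := by
    intro σ
    obtain ⟨v, hv1, hv2⟩ := E5 g σ
    have h2 : g * b σ * g⁻¹ = b (v * σ) := by
      rw [(hmulAB v σ).2, hv2]; group
    have h3 : a (b σ) * b (b σ) = g * b σ * g⁻¹ := (hgψ (b σ)).symm
    have h4 : a (b σ) = b ((v * σ) * (b σ)⁻¹) := by
      rw [(hmulAB (v * σ) ((b σ)⁻¹)).2, (haInv (b σ)).2, ← h2, ← h3]
      group
    exact E7 _ _ h4
  -- conclusion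
  intro σ
  refine ⟨a (a σ) * c (b σ), ?_⟩
  calc π * (π * lambda G σ * π⁻¹) * π⁻¹
      = (π * lambda G (a σ) * π⁻¹) * (π * rho G (b σ) * π⁻¹) := by
        rw [hab σ, LR_def]; group
  _ = LR (a (a σ)) (b (a σ)) * LR (c (b σ)) (d (b σ)) := by rw [hab, hcd]
  _ = LR (a (a σ) * c (b σ)) (b (a σ) * d (b σ)) := LR_mul _ _ _ _
  _ = LR (a (a σ) * c (b σ)) 1 := by
        rw [E16 σ, (E13 (b σ)).1, E17 σ, one_mul]
  _ = lambda G (a (a σ) * c (b σ)) := (lambda_eq_LR _).symm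

end Key

section Final

variable {G : Type*} [Group G]

lemma sq_mem_Hol (hZ : Subgroup.center G = ⊥)
    (hinn : Function.Surjective (MulAut.conj : G →* MulAut G))
    {π : Equiv.Perm G} (hπ : π ∈ NHol G) (h1 : π 1 = 1) : π ^ 2 ∈ Hol G := by
  have h1' : (π⁻¹ : Equiv.Perm G) 1 = 1 := by
    calc (π⁻¹ : Equiv.Perm G) 1 = π⁻¹ (π 1) := by rw [h1]
    _ = 1 := π.symm_apply_apply 1
  have k1 := key hZ hinn hπ h1
  have k2 := key hZ hinn (inv_mem hπ : π⁻¹ ∈ NHol G) h1'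
  rw [mem_Hol_iff]
  intro n
  constructor
  · rintro ⟨σ, rfl⟩
    obtain ⟨τ, hτ⟩ := k1 σ
    refine ⟨τ, ?_⟩
    rw [← hτ, pow_two]
    group
  · rintro ⟨τ, hτ⟩
    obtain ⟨τ', hτ'⟩ := k2 τ
    refine ⟨τ', ?_⟩
    rw [← hτ']
    have hn : n = (π ^ 2)⁻¹ * lambda G τ * π ^ 2 := by
      rw [hτ]; group
    rw [hn, pow_two]
    group

end Final


/-- If `G` is a complete group (trivial center and every automorphism is
inner), then `T(G) = NHol(G)/Hol(G)` is elementary `2`-abelian. -/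
theorem T_of_complete_is_elementary_two_abelian
    (G : Type*) [Group G]
    (hZ : Subgroup.center G = ⊥)
    (hinn : Function.Surjective (MulAut.conj : G →* MulAut G)) :
    ∀ x : THol G, x ^ 2 = 1 := by
  intro x
  refine QuotientGroup.induction_on x ?_
  intro π
  have hc : lambda G ((π : Equiv.Perm G) 1) ∈ Hol G := lambda_mem_Hol _
  set L : NHol G := ⟨lambda G ((π : Equiv.Perm G) 1), Subgroup.le_normalizer hc⟩ with hL
  set π₀ : NHol G := L⁻¹ * π with hπ₀
  have hL1 : (QuotientGroup.mk L : THol G) = 1 :=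
    (QuotientGroup.eq_one_iff L).mpr (by rwa [Subgroup.mem_subgroupOf])
  have hmk : (QuotientGroup.mk π : THol G) = QuotientGroup.mk π₀ := by
    have h2 : π = L * π₀ := by rw [hπ₀]; group
    calc (QuotientGroup.mk π : THol G) = QuotientGroup.mk (L * π₀) := by rw [← h2]
    _ = QuotientGroup.mk L * QuotientGroup.mk π₀ := rfl
    _ = QuotientGroup.mk π₀ := by rw [hL1, one_mul]
  rw [hmk]
  have h10 : (π₀ : Equiv.Perm G) 1 = 1 := by
    have h3 : (π₀ : Equiv.Perm G) = (lambda G ((π : Equiv.Perm G) 1))⁻¹ * (π : Equiv.Perm G) := by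
      rw [hπ₀]; rfl
    rw [h3]
    simp only [Equiv.Perm.mul_apply, ← map_inv]
    rw [lambda_apply]
    simp
  have hsq : ((π₀ : Equiv.Perm G)) ^ 2 ∈ Hol G := sq_mem_Hol hZ hinn π₀.2 h10
  have : (QuotientGroup.mk (π₀ ^ 2) : THol G) = 1 := by
    rw [QuotientGroup.eq_one_iff, Subgroup.mem_subgroupOf]
    simpa using hsq
  calc (QuotientGroup.mk π₀ : THol G) ^ 2 = QuotientGroup.mk (π₀ ^ 2) := by
        rw [pow_two, pow_two]; rfl
  _ = 1 := this
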